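/- Let G be a torsion-free group of nilpotency class at most 2. Then: (i) any two elements of G lying in the same connected component of the power graph P(G) generate a cyclic subgroup of G; and (ii) for every connected component C of P(G), the set C ∪ {1} is a subgroup of G. -/

import Mathlib

/-- The power graph of a group `G`: distinct `x, y` are adjacent iff one is a
nonzero integer power of the other. -/
def powerGraph (G : Type*) [Group G] : SimpleGraph G where
  Adj x y := x ≠ y ∧ ∃ n : ℤ, n ≠ 0 ∧ (y = x ^ n ∨ x = y ^ n)
  symm := by
    refine ⟨?_⟩
    rintro x y ⟨hxy, n, hn, h⟩
    exact ⟨hxy.symm, n, hn, h.symm⟩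
  loopless := ⟨by rintro x ⟨h, -⟩; exact h rfl⟩

/-- There is an arc `x → y` in the directed power graph iff `x ≠ y` and `y` is a
nonzero integer power of `x`. -/
def powArc {G : Type*} [Group G] (x y : G) : Prop :=
  x ≠ y ∧ ∃ n : ℤ, n ≠ 0 ∧ y = x ^ n

section Aux

variable {G : Type*} [Group G]

open scoped commutatorElement

/-- torsion-freeness: nonzero integer power trivial implies trivial -/
lemma tf_zpow (htf : ∀ g : G, g ≠ 1 → ¬ IsOfFinOrder g) {g : G} {n : ℤ}
    (hn : n ≠ 0) (h : g ^ n = 1) : g = 1 := by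
  by_contra hg
  refine htf g hg (isOfFinOrder_iff_pow_eq_one.mpr ⟨n.natAbs, Int.natAbs_pos.mpr hn, ?_⟩)
  rcases Int.natAbs_eq n with he | he
  · rw [← zpow_natCast, ← he, h]
  · rw [← zpow_natCast, ← neg_neg ((n.natAbs : ℤ)), ← he, zpow_neg, h, inv_one]

/-- class 2: x^n * y = c^n * (y * x^n) where c = ⁅x,y⁆ -/
lemma pow_mul_comm_aux {x y c : G} (hc : ∀ z : G, z * c = c * z)
    (hxy : x * y = c * (y * x)) : ∀ n : ℕ, x ^ n * y = c ^ n * (y * x ^ n) := by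
  intro n
  induction n with
  | zero => simp
  | succ k ih =>
    have h1 : x ^ (k+1) * y = c * (x ^ k * y * x) := by
      rw [pow_succ, mul_assoc, hxy, ← mul_assoc, ← mul_assoc, hc (x ^ k),
        mul_assoc, mul_assoc, ← mul_assoc (x ^ k) y x]
    rw [h1, ih]
    group

/-- in torsion-free class-2 group, x^a = y^b with a ≠ 0 forces commuting -/
lemma comm_of_zpow_eq (htf : ∀ g : G, g ≠ 1 → ¬ IsOfFinOrder g)
    (hnil : commutator G ≤ Subgroup.center G) {x y : G} {a b : ℤ}
    (ha : a ≠ 0) (h : x ^ a = y ^ b) : Commute x y := by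
  -- reduce to positive exponent
  wlog hapos : 0 < a generalizing a b
  · have h' : x ^ (-a) = y ^ (-b) := by rw [zpow_neg, zpow_neg, h]
    exact this (neg_ne_zero.mpr ha) h' (by omega)
  set c : G := ⁅x, y⁆ with hcdef
  have hcmem : c ∈ Subgroup.center G :=
    hnil (Subgroup.commutator_mem_commutator (Subgroup.mem_top x) (Subgroup.mem_top y))
  have hc : ∀ z : G, z * c = c * z := fun z =>
    (Subgroup.mem_center_iff.mp hcmem) z
  have hxy : x * y = c * (y * x) := by
    rw [hcdef]; group
  have key := pow_mul_comm_aux hc hxy a.toNat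
  have hna : ((a.toNat : ℤ)) = a := Int.toNat_of_nonneg hapos.le
  have hl : x ^ a * y = y * x ^ a := by
    rw [h, ← zpow_add_one, ← zpow_one_add, add_comm]
  rw [← hna, zpow_natCast] at hl
  rw [hl] at key
  have hc1 : c ^ a.toNat = 1 := right_eq_mul.mp key
  have : c = 1 := by
    refine tf_zpow htf (n := (a.toNat : ℤ)) (by omega) ?_
    rw [zpow_natCast, hc1]
  rwa [hcdef, commutatorElement_eq_one_iff_mul_comm] at this

/-- main algebraic lemma -/
lemma exists_common_gen (htf : ∀ g : G, g ≠ 1 → ¬ IsOfFinOrder g)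
    (hnil : commutator G ≤ Subgroup.center G) {x y : G} {a b : ℤ}
    (ha : a ≠ 0) (hb : b ≠ 0) (h : x ^ a = y ^ b) :
    ∃ g : G, x ∈ Subgroup.zpowers g ∧ y ∈ Subgroup.zpowers g ∧
      g ∈ Subgroup.closure ({x, y} : Set G) := by
  have hcomm : Commute x y := comm_of_zpow_eq htf hnil ha h
  set d : ℤ := (Int.gcd a b : ℤ) with hd
  have hdpos : 0 < d := by
    have := Int.gcd_pos_of_ne_zero_left b ha
    omega
  set a' : ℤ := a / d with ha'
  set b' : ℤ := b / d with hb'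
  have hda : d ∣ a := Int.gcd_dvd_left a b
  have hdb : d ∣ b := Int.gcd_dvd_right a b
  have haa : a = a' * d := by rw [ha', Int.ediv_mul_cancel hda]
  have hbb : b = b' * d := by rw [hb', Int.ediv_mul_cancel hdb]
  have ha'0 : a' ≠ 0 := fun hz => ha (by rw [haa, hz, zero_mul])
  have hb'0 : b' ≠ 0 := fun hz => hb (by rw [hbb, hz, zero_mul])
  -- x^{a'} = y^{b'}
  have hkey : x ^ a' = y ^ b' := by
    have h1 : (x ^ a' * (y ^ b')⁻¹) ^ d = 1 := by
      have hcz : Commute (x ^ a') ((y ^ b')⁻¹) := (hcomm.zpow_zpow a' b').inv_right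
      rw [hcz.mul_zpow, ← zpow_neg, ← zpow_mul, ← zpow_mul, ← haa, h, neg_mul,
        ← hbb, ← zpow_add]
      simp
    have := tf_zpow htf (by omega : d ≠ 0) h1
    rw [mul_inv_eq_one] at this
    exact this
  -- Bezout
  have hgcd : Int.gcd a' b' = 1 := by
    rw [ha', hb', hd]
    exact Int.gcd_div_gcd_div_gcd (by omega)
  have hbez : a' * Int.gcdA a' b' + b' * Int.gcdB a' b' = 1 := by
    have := Int.gcd_eq_gcd_ab a' b'
    rw [hgcd] at this
    exact_mod_cast this.symm
  set s : ℤ := Int.gcdA a' b'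
  set t : ℤ := Int.gcdB a' b'
  refine ⟨x ^ t * y ^ s, ?_, ?_, ?_⟩
  · refine ⟨b', ?_⟩
    show (x ^ t * y ^ s) ^ b' = x
    have hcz : Commute (x ^ t) (y ^ s) := hcomm.zpow_zpow t s
    rw [hcz.mul_zpow, ← zpow_mul, ← zpow_mul, mul_comm s b', zpow_mul y b' s, ← hkey,
      ← zpow_mul, ← zpow_add]
    rw [show t * b' + a' * s = 1 from by rw [mul_comm t b', add_comm]; exact hbez,
      zpow_one]
  · refine ⟨a', ?_⟩
    show (x ^ t * y ^ s) ^ a' = y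
    have hcz : Commute (x ^ t) (y ^ s) := hcomm.zpow_zpow t s
    rw [hcz.mul_zpow, ← zpow_mul, ← zpow_mul, mul_comm t a', zpow_mul x a' t, hkey,
      ← zpow_mul, ← zpow_add]
    rw [show b' * t + s * a' = 1 from by rw [mul_comm s a', add_comm]; exact hbez,
      zpow_one]
  · have hx : x ∈ Subgroup.closure ({x, y} : Set G) :=
      Subgroup.subset_closure (by simp)
    have hy : y ∈ Subgroup.closure ({x, y} : Set G) :=
      Subgroup.subset_closure (by simp)
    exact mul_mem (zpow_mem hx t) (zpow_mem hy s)

/-- reachability gives a common power relation -/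
lemma reach_rel (htf : ∀ g : G, g ≠ 1 → ¬ IsOfFinOrder g) {x y : G}
    (h : (powerGraph G).Reachable x y) :
    ∃ a b : ℤ, a ≠ 0 ∧ b ≠ 0 ∧ x ^ a = y ^ b := by
  obtain ⟨w⟩ := h
  induction w with
  | nil => exact ⟨1, 1, one_ne_zero, one_ne_zero, rfl⟩
  | cons hadj _ ih =>
    obtain ⟨a, b, ha, hb, hab⟩ := ih
    obtain ⟨hne, n, hn, hor⟩ := hadj
    rcases hor with he | he
    · -- next = cur ^ n : cur ^ (n*a) = next ^ a
      exact ⟨n * a, b, mul_ne_zero hn ha, hb, by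
        rw [zpow_mul, ← he, hab]⟩
    · exact ⟨a, b * n, ha, mul_ne_zero hb hn, by
        rw [he, ← zpow_mul, mul_comm n a, zpow_mul, hab, ← zpow_mul]⟩

lemma isolated_one {y : G} (htf : ∀ g : G, g ≠ 1 → ¬ IsOfFinOrder g)
    (h : (powerGraph G).Reachable 1 y) : y = 1 := by
  obtain ⟨a, b, ha, hb, hab⟩ := reach_rel htf h
  rw [one_zpow] at hab
  exact tf_zpow htf hb hab.symm

end Aux

/-- In a torsion-free group of nilpotency class at most 2: (i) any two elements
in the same connected component of the power graph generate a cyclic subgroup;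
(ii) for every connected component `C`, the set `C ∪ {1}` is a subgroup. -/
theorem stmt_15 (G : Type*) [Group G]
    (htf : ∀ g : G, g ≠ 1 → ¬ IsOfFinOrder g)
    (hnil : commutator G ≤ Subgroup.center G) :
    (∀ x y : G, (powerGraph G).Reachable x y →
      IsCyclic ↥(Subgroup.closure {x, y})) ∧
    (∀ C : (powerGraph G).ConnectedComponent,
      ∃ S : Subgroup G, (S : Set G) = C.supp ∪ {1}) := by
  have main : ∀ x y : G, (powerGraph G).Reachable x y →
      ∃ g : G, x ∈ Subgroup.zpowers g ∧ y ∈ Subgroup.zpowers g ∧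
        g ∈ Subgroup.closure ({x, y} : Set G) := by
    intro x y h
    obtain ⟨a, b, ha, hb, hab⟩ := reach_rel htf h
    exact exists_common_gen htf hnil ha hb hab
  constructor
  · intro x y h
    obtain ⟨g, hx, hy, hg⟩ := main x y h
    have heq : Subgroup.closure ({x, y} : Set G) = Subgroup.zpowers g := by
      apply le_antisymm
      · rw [Subgroup.closure_le]
        rintro z (rfl | rfl)
        · exact hx
        · exact hy
      · exact Subgroup.zpowers_le.mpr hg
    rw [heq]
    refine ⟨⟨⟨g, Subgroup.mem_zpowers g⟩, ?_⟩⟩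
    rintro ⟨z, n, rfl⟩
    exact ⟨n, by ext; simp⟩
  · intro C
    refine ⟨{ carrier := C.supp ∪ {1}
              one_mem' := Or.inr rfl
              mul_mem' := ?_
              inv_mem' := ?_ }, rfl⟩
    · rintro x y hx hy
      rcases eq_or_ne x 1 with rfl | hx1
      · rw [one_mul]; exact hy
      rcases eq_or_ne y 1 with rfl | hy1
      · rw [mul_one]; exact hx
      have hx' : x ∈ C.supp := by
        rcases hx with h | h
        · exact h
        · exact absurd h hx1
      have hy' : y ∈ C.supp := by
        rcases hy with h | h
        · exact h
        · exact absurd h hy1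
      rcases eq_or_ne (x * y) 1 with he | hne1
      · exact Or.inr he
      left
      rw [SimpleGraph.ConnectedComponent.mem_supp_iff] at hx' hy' ⊢
      have hreach : (powerGraph G).Reachable x y :=
        SimpleGraph.ConnectedComponent.exact (hx'.trans hy'.symm)
      obtain ⟨g, ⟨s, hs0⟩, ⟨t, ht0⟩, _⟩ := main x y hreach
      have hs : g ^ s = x := hs0
      have ht : g ^ t = y := ht0
      have hg1 : g ≠ 1 := fun h => hx1 (by rw [← hs, h, one_zpow])
      have hs0 : s ≠ 0 := fun h => hx1 (by rw [← hs, h, zpow_zero])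
      have hxy : x * y = g ^ (s + t) := by rw [zpow_add, hs, ht]
      have hst0 : s + t ≠ 0 := fun h => hne1 (by rw [hxy, h, zpow_zero])
      have r1 : (powerGraph G).Reachable g x := by
        rcases eq_or_ne g x with h | hgx
        · exact h ▸ SimpleGraph.Reachable.refl g
        · exact SimpleGraph.Adj.reachable ⟨hgx, s, hs0, Or.inl hs.symm⟩
      have r2 : (powerGraph G).Reachable g (x * y) := by
        rcases eq_or_ne g (x * y) with h | hgx
        · exact h ▸ SimpleGraph.Reachable.refl g
        · exact SimpleGraph.Adj.reachable ⟨hgx, s + t, hst0, Or.inl hxy⟩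
      have : (powerGraph G).Reachable (x * y) x := r2.symm.trans r1
      rw [← hx']
      exact SimpleGraph.ConnectedComponent.sound this
    · rintro x hx
      rcases eq_or_ne x 1 with rfl | hx1
      · exact Or.inr (by simp)
      have hx' : x ∈ C.supp := by
        rcases hx with h | h
        · exact h
        · exact absurd h hx1
      left
      rw [SimpleGraph.ConnectedComponent.mem_supp_iff] at hx' ⊢
      rcases eq_or_ne x⁻¹ x with he | hne
      · rw [he]; exact hx'
      have : (powerGraph G).Reachable x⁻¹ x :=
        SimpleGraph.Adj.reachable ⟨hne, -1, by norm_num, Or.inr (by rw [zpow_neg_one])⟩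
      rw [← hx']
      exact SimpleGraph.ConnectedComponent.sound this
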